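/- Let φ ⊆ Σ^ω be a nonempty (satisfiable) specification and let (G, sI, λ) be a synthesis game for φ with parity objective Φ = Parity(p). Define Es = {(u,t) ∈ E2 : u ∈ Win12(Φ) and t ∉ Win12(Φ)}. Then the environment assumption ψ_Es is realizable for the environment, i.e., there is a Mealy transducer with input alphabet 𝓞 and output alphabet 𝓘 whose language is contained in ψ_Es. -/

import Mathlib

open scoped Classical
noncomputable section

/-! ### Deterministic two-player games on graphs -/

/-- The set of states occurring infinitely often in a play. -/
def infSet {S : Type} (π : ℕ → S) : Set S :=
  {t | ∀ N : ℕ, ∃ k : ℕ, N ≤ k ∧ π k = t}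

/-- Parity objective: the minimal priority occurring infinitely often is even. -/
def ParityObj {S : Type} (p : S → ℕ) : Set (ℕ → S) :=
  {π | Even (sInf (p '' infSet π))}

/-- Co-parity objective: the minimal priority occurring infinitely often is odd.
This is the complement of `ParityObj p`. -/
def CoparityObj {S : Type} (p : S → ℕ) : Set (ℕ → S) :=
  {π | Odd (sInf (p '' infSet π))}

/-- Safety objective: only states of `F` are visited. -/
def SafeObj {S : Type} (F : Set S) : Set (ℕ → S) := {π | ∀ k : ℕ, π k ∈ F}

/-- Reachability objective: some state of `F` is visited. -/
def ReachObj {S : Type} (F : Set S) : Set (ℕ → S) := {π | ∃ k : ℕ, π k ∈ F}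

/-- Büchi objective: some state of `F` is visited infinitely often. -/
def BuchiObj {S : Type} (F : Set S) : Set (ℕ → S) := {π | ∃ t ∈ F, t ∈ infSet π}

/-- A deterministic game graph: a finite directed graph in which every state
has at least one successor, together with the set `S1` of player-1 states
(the remaining states belong to player 2). -/
structure DetGame (S : Type) [Fintype S] where
  E : S → S → Prop
  S1 : Set S
  exists_succ : ∀ s : S, ∃ t : S, E s t

namespace DetGame

variable {S : Type} [Fintype S]

/-- Player-2 states. -/
def S2 (G : DetGame S) : Set S := G.S1ᶜ

/-- A play: an infinite sequence of states following edges. -/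
def IsPlay (G : DetGame S) (π : ℕ → S) : Prop := ∀ k : ℕ, G.E (π k) (π (k + 1))

/-- A strategy for player 1: given the history of states strictly before the
current state, and the current state, it chooses a successor, which must be
along an edge whenever the current state is a player-1 state. -/
structure Strat1 (G : DetGame S) where
  f : List S → S → S
  valid : ∀ (h : List S) (s : S), s ∈ G.S1 → G.E s (f h s)

/-- A strategy for player 2. -/
structure Strat2 (G : DetGame S) where
  f : List S → S → S
  valid : ∀ (h : List S) (s : S), s ∈ G.S2 → G.E s (f h s)

/-- A memoryless strategy depends only on the current state. -/
def Strat1.Memoryless {G : DetGame S} (α : Strat1 G) : Prop :=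
  ∀ (h h' : List S) (s : S), α.f h s = α.f h' s

def Strat2.Memoryless {G : DetGame S} (β : Strat2 G) : Prop :=
  ∀ (h h' : List S) (s : S), β.f h s = β.f h' s

/-- The (history, current state) pair after `k` steps of the play from `s`
where player 1 follows `α` and player 2 follows `β`. -/
def histPair (G : DetGame S) (α : Strat1 G) (β : Strat2 G) (s : S) :
    ℕ → List S × S
  | 0 => ([], s)
  | k + 1 =>
    let p := histPair G α β s k
    (p.1 ++ [p.2], if p.2 ∈ G.S1 then α.f p.1 p.2 else β.f p.1 p.2)

/-- The unique play from `s` when player 1 follows `α` and player 2 follows `β`. -/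
def outcome (G : DetGame S) (s : S) (α : Strat1 G) (β : Strat2 G) : ℕ → S :=
  fun k => (histPair G α β s k).2

/-- Sure winning set of player 1 for objective `Φ`. -/
def Win1 (G : DetGame S) (Φ : Set (ℕ → S)) : Set S :=
  {s | ∃ α : Strat1 G, ∀ β : Strat2 G, G.outcome s α β ∈ Φ}

/-- Sure winning set of player 2 for objective `Φ`. -/
def Win2 (G : DetGame S) (Φ : Set (ℕ → S)) : Set S :=
  {s | ∃ β : Strat2 G, ∀ α : Strat1 G, G.outcome s α β ∈ Φ}

/-- Cooperative winning set: both players together can achieve `Φ`. -/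
def Win12 (G : DetGame S) (Φ : Set (ℕ → S)) : Set S :=
  {s | ∃ (α : Strat1 G) (β : Strat2 G), G.outcome s α β ∈ Φ}

/-- The set of player-2 edges. -/
def E2 (G : DetGame S) : Set (S × S) := {e | G.E e.1 e.2 ∧ e.1 ∈ G.S2}

/-- The objective "either some forbidden edge of `Es` is taken, or the play
remains in the safety component `Safe(Win12(Φ))` of `Φ`". -/
def AssumeSafe (G : DetGame S) (Es : Set (S × S)) (Φ : Set (ℕ → S)) :
    Set (ℕ → S) :=
  {π | (∃ i : ℕ, (π i, π (i + 1)) ∈ Es) ∨ π ∈ SafeObj (G.Win12 Φ)}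

/-- A safety assumption `Es` is safe-sufficient for a state `s` and an
objective `Φ` if player 1 wins `AssumeSafe Es Φ` from `s`. -/
def SafeSufficient (G : DetGame S) (Es : Set (S × S)) (s : S)
    (Φ : Set (ℕ → S)) : Prop :=
  s ∈ G.Win1 (G.AssumeSafe Es Φ)

/-- A safety assumption `Es` is restrictive for `s` and `Φ` if some pair of
strategies produces a play that uses an edge of `Es` and stays in the safety
component of `Φ`. -/
def Restrictive (G : DetGame S) (Es : Set (S × S)) (s : S)
    (Φ : Set (ℕ → S)) : Prop :=
  ∃ (α : Strat1 G) (β : Strat2 G),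
    (∃ i : ℕ, (G.outcome s α β i, G.outcome s α β (i + 1)) ∈ Es) ∧
      G.outcome s α β ∈ SafeObj (G.Win12 Φ)

/-- The objective "either the strong fairness assumption on `El` is violated
(some source state of an edge in `El` repeats forever while the target of
that edge does not), or `Φ` holds". -/
def AssumeFair (G : DetGame S) (El : Set (S × S)) (Φ : Set (ℕ → S)) :
    Set (ℕ → S) :=
  {π | (∃ e ∈ El, e.1 ∈ infSet π ∧ e.2 ∉ infSet π) ∨ π ∈ Φ}

end DetGame

/-! ### Transducers and synthesis games -/

/-- A Moore transducer with input alphabet `Set I` and output alphabet `Set O`. -/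
structure Moore (I O : Type) where
  Q : Type
  fin : Finite Q
  qI : Q
  tr : Q → Set I → Q
  out : Q → Set O

namespace Moore

variable {I O : Type} (T : Moore I O)

/-- The run of the transducer over an infinite input word. -/
def run (w : ℕ → Set I) : ℕ → T.Q
  | 0 => T.qI
  | i + 1 => T.tr (run w i) (w i)

/-- The infinite word over `Set I × Set O` generated by the run on `w`. -/
def output (w : ℕ → Set I) : ℕ → Set I × Set O :=
  fun i => (w i, T.out (T.run w i))

/-- The language of the transducer. -/
def lang : Set (ℕ → Set I × Set O) := {x | ∃ w : ℕ → Set I, x = T.output w}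

end Moore

/-- A specification is (Moore) realizable if some Moore transducer
implements it. -/
def MooreRealizable {I O : Type} (L : Set (ℕ → Set I × Set O)) : Prop :=
  ∃ T : Moore I O, T.lang ⊆ L

/-- `ψ` is a sufficient environment assumption for `φ` if `ψᶜ ∪ φ` is
(Moore) realizable. -/
def SufficientAssumption {I O : Type} (φ ψ : Set (ℕ → Set I × Set O)) : Prop :=
  MooreRealizable (ψᶜ ∪ φ)

/-- A Mealy transducer with input alphabet `Set O` and output alphabet `Set I`
(an environment). -/
structure Mealy (I O : Type) where
  Q : Type
  fin : Finite Q
  qI : Q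
  tr : Q → Set O → Q
  out : Q → Set O → Set I

namespace Mealy

variable {I O : Type} (T : Mealy I O)

def run (w : ℕ → Set O) : ℕ → T.Q
  | 0 => T.qI
  | i + 1 => T.tr (run w i) (w i)

def output (w : ℕ → Set O) : ℕ → Set I × Set O :=
  fun i => (T.out (T.run w i) (w i), w i)

def lang : Set (ℕ → Set I × Set O) := {x | ∃ w : ℕ → Set O, x = T.output w}

end Mealy

/-- `ψ` is realizable for the environment if some Mealy transducer with
input alphabet `Set O` and output alphabet `Set I` implements it. -/
def EnvRealizable {I O : Type} (ψ : Set (ℕ → Set I × Set O)) : Prop :=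
  ∃ T : Mealy I O, T.lang ⊆ ψ

/-- A synthesis game: a bipartite deterministic game graph with an initial
player-1 state, whose player-1 states are labeled by input letters and whose
player-2 states are labeled by output letters, deterministic and complete
with respect to the labels. -/
structure SynthGame (S : Type) [Fintype S] (I O : Type) extends DetGame S where
  sI : S
  sI_mem : sI ∈ S1
  bipartite : ∀ s t : S, E s t → (s ∈ S1 ∧ t ∉ S1) ∨ (s ∉ S1 ∧ t ∈ S1)
  labI : S → Set I
  labO : S → Set O
  labelDet1 : ∀ s t t' : S, s ∈ S1 → E s t → E s t' → labO t = labO t' → t = t'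
  labelDet2 : ∀ s t t' : S, s ∉ S1 → E s t → E s t' → labI t = labI t' → t = t'
  complete1 : ∀ s ∈ S1, ∀ o : Set O, ∃ t : S, E s t ∧ labO t = o
  complete2 : ∀ s ∉ S1, ∀ i : Set I, ∃ t : S, E s t ∧ labI t = i

namespace SynthGame

variable {S I O : Type} [Fintype S] (SG : SynthGame S I O)

/-- The infinite word over `Set I × Set O` corresponding to a play from `sI`. -/
def word (π : ℕ → S) : ℕ → Set I × Set O :=
  fun i => (SG.labI (π (2 * i + 2)), SG.labO (π (2 * i + 1)))

/-- `SG` with priority function `p` is a synthesis game for the specification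
`φ`: a play from `sI` satisfies the parity objective iff its word is in `φ`. -/
def IsGameFor (p : S → ℕ) (φ : Set (ℕ → Set I × Set O)) : Prop :=
  ∀ π : ℕ → S, SG.toDetGame.IsPlay π → π 0 = SG.sI →
    (π ∈ ParityObj p ↔ SG.word π ∈ φ)

/-- The environment assumption defined by a safety assumption `Es`:
words of plays from `sI` never using an edge of `Es`. -/
def psiSafety (Es : Set (S × S)) : Set (ℕ → Set I × Set O) :=
  {w | ∃ π : ℕ → S, SG.toDetGame.IsPlay π ∧ π 0 = SG.sI ∧ SG.word π = w ∧
    ∀ i : ℕ, (π i, π (i + 1)) ∉ Es}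

/-- The environment assumption defined by a strongly fair assumption `El`:
words of plays from `sI` in which, for every edge of `El`, either the source
occurs only finitely often or the edge is taken infinitely often. -/
def psiFair (El : Set (S × S)) : Set (ℕ → Set I × Set O) :=
  {w | ∃ π : ℕ → S, SG.toDetGame.IsPlay π ∧ π 0 = SG.sI ∧ SG.word π = w ∧
    ∀ e ∈ El, e.1 ∉ infSet π ∨
      ∀ N : ℕ, ∃ k : ℕ, N ≤ k ∧ π k = e.1 ∧ π (k + 1) = e.2}

end SynthGame

namespace DetGame

variable {S : Type} [Fintype S]

lemma outcome_isPlay (G : DetGame S) (s : S) (α : Strat1 G) (β : Strat2 G) :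
    G.IsPlay (G.outcome s α β) := by
  intro k
  show G.E (G.histPair α β s k).2 (G.histPair α β s (k + 1)).2
  simp only [histPair]
  split
  · exact α.valid _ _ (by assumption)
  · exact β.valid _ _ (by simpa [S2] using (by assumption : ¬ _))

/-- Any play satisfying `Φ` starts in the cooperative winning set. -/
lemma play_mem_win12 (G : DetGame S) {π : ℕ → S} {Φ : Set (ℕ → S)}
    (hπ : G.IsPlay π) (hΦ : π ∈ Φ) : π 0 ∈ G.Win12 Φ := by
  classical
  set f : List S → S → S := fun h s =>
    if hE : G.E s (π (h.length + 1)) then π (h.length + 1)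
    else Classical.choose (G.exists_succ s) with hf
  have hvalid : ∀ (h : List S) (s : S), G.E s (f h s) := by
    intro h s
    by_cases hE : G.E s (π (h.length + 1))
    · simpa [hf, hE] using hE
    · simpa [hf, hE] using Classical.choose_spec (G.exists_succ s)
  set α : Strat1 G := ⟨f, fun h s _ => hvalid h s⟩ with hα
  set β : Strat2 G := ⟨f, fun h s _ => hvalid h s⟩ with hβ
  have key : ∀ k : ℕ, (G.histPair α β (π 0) k).2 = π k ∧
      (G.histPair α β (π 0) k).1.length = k := by
    intro k
    induction k with
    | zero => simp [histPair]
    | succ k ih =>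
      obtain ⟨h2, h1⟩ := ih
      constructor
      · show (if _ ∈ G.S1 then α.f _ _ else β.f _ _) = π (k + 1)
        have hfe : f (G.histPair α β (π 0) k).1 (G.histPair α β (π 0) k).2
            = π (k + 1) := by
          rw [h2, hf]
          simp only [h1]
          exact dif_pos (hπ k)
        split <;> simpa [hα, hβ] using hfe
      · show ((G.histPair α β (π 0) k).1 ++ [(G.histPair α β (π 0) k).2]).length = k + 1
        simp [h1]
  have hout : G.outcome (π 0) α β = π := funext fun k => (key k).1
  exact ⟨α, β, by rw [hout]; exact hΦ⟩

lemma infSet_shift {π : ℕ → S} : infSet (fun k => π (k + 1)) = infSet π := by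
  ext t
  constructor
  · intro h N
    obtain ⟨k, hk, he⟩ := h N
    exact ⟨k + 1, by omega, he⟩
  · intro h N
    obtain ⟨k, hk, he⟩ := h (N + 1)
    refine ⟨k - 1, by omega, ?_⟩
    show π (k - 1 + 1) = t
    rwa [Nat.sub_add_cancel (by omega)]

/-- From a cooperatively winning state for parity, some successor is also
cooperatively winning. -/
lemma win12_succ (G : DetGame S) (p : S → ℕ) {s : S}
    (h : s ∈ G.Win12 (ParityObj p)) :
    ∃ t : S, G.E s t ∧ t ∈ G.Win12 (ParityObj p) := by
  obtain ⟨α, β, hΦ⟩ := h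
  set π := G.outcome s α β with hπdef
  have hplay : G.IsPlay π := G.outcome_isPlay s α β
  refine ⟨π 1, ?_, ?_⟩
  · have := hplay 0
    simpa [hπdef, outcome, histPair] using this
  · have hshift : (fun k => π (k + 1)) ∈ ParityObj p := by
      show Even (sInf (p '' infSet fun k => π (k + 1)))
      rw [infSet_shift]
      exact hΦ
    exact G.play_mem_win12 (fun k => hplay (k + 1)) hshift

end DetGame

theorem psiSafety_env_realizable {S I O : Type} [Fintype S] [Fintype I]
    [Fintype O] (SG : SynthGame S I O) (p : S → ℕ)
    (φ : Set (ℕ → Set I × Set O)) (hφ : φ.Nonempty) (hfor : SG.IsGameFor p φ)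
    (Es : Set (S × S))
    (hEs : Es = {e | e ∈ SG.toDetGame.E2 ∧
      e.1 ∈ SG.toDetGame.Win12 (ParityObj p) ∧
      e.2 ∉ SG.toDetGame.Win12 (ParityObj p)}) :
    EnvRealizable (SG.psiSafety Es) := by
  classical
  set G := SG.toDetGame with hG
  set W := G.Win12 (ParityObj p) with hW
  -- choice of a winning-preserving successor at any state
  have hnext2 : ∀ t : S, ∃ t' : S, G.E t t' ∧ (t ∈ W → t' ∈ W) := by
    intro t
    by_cases ht : t ∈ W
    · obtain ⟨t', hE, hW'⟩ := G.win12_succ p ht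
      exact ⟨t', hE, fun _ => hW'⟩
    · obtain ⟨t', hE⟩ := G.exists_succ t
      exact ⟨t', hE, fun h => absurd h ht⟩
  set n2 : S → S := fun t => Classical.choose (hnext2 t) with hn2
  have hn2E : ∀ t, G.E t (n2 t) := fun t => (Classical.choose_spec (hnext2 t)).1
  have hn2W : ∀ t, t ∈ W → n2 t ∈ W := fun t => (Classical.choose_spec (hnext2 t)).2
  -- choice of the successor labeled with a given output
  set n1 : S → Set O → S := fun s o =>
    if h : s ∈ SG.S1 then Classical.choose (SG.complete1 s h o) else s with hn1
  have hn1E : ∀ s (hs : s ∈ SG.S1) (o : Set O),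
      G.E s (n1 s o) ∧ SG.labO (n1 s o) = o := by
    intro s hs o
    have := Classical.choose_spec (SG.complete1 s hs o)
    simpa [hn1, hs] using this
  -- the Mealy transducer
  set T : Mealy I O := ⟨S, Finite.of_fintype S, SG.sI,
    fun s o => n2 (n1 s o), fun s o => SG.labI (n2 (n1 s o))⟩ with hT
  refine ⟨T, ?_⟩
  rintro x ⟨w, rfl⟩
  set r : ℕ → S := T.run w with hr
  have hr0 : r 0 = SG.sI := rfl
  have hrstep : ∀ i, r (i + 1) = n2 (n1 (r i) (w i)) := fun i => rfl
  -- invariant: the transducer tracks player-1 states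
  have hbip1 : ∀ s t : S, s ∈ SG.S1 → G.E s t → t ∉ SG.S1 := by
    intro s t hs hE
    rcases SG.bipartite s t hE with ⟨_, h⟩ | ⟨h, _⟩
    · exact h
    · exact absurd hs h
  have hbip2 : ∀ s t : S, s ∉ SG.S1 → G.E s t → t ∈ SG.S1 := by
    intro s t hs hE
    rcases SG.bipartite s t hE with ⟨h, _⟩ | ⟨_, h⟩
    · exact absurd h hs
    · exact h
  have hrmem : ∀ i, r i ∈ SG.S1 := by
    intro i
    induction i with
    | zero => rw [hr0]; exact SG.sI_mem
    | succ i ih =>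
      rw [hrstep i]
      have h1 : G.E (r i) (n1 (r i) (w i)) := (hn1E (r i) ih (w i)).1
      have h2 : n1 (r i) (w i) ∉ SG.S1 := hbip1 _ _ ih h1
      exact hbip2 _ _ h2 (hn2E _)
  -- the play realized in the game graph
  set π : ℕ → S := fun k =>
    if k % 2 = 0 then r (k / 2) else n1 (r (k / 2)) (w (k / 2)) with hπ
  have hπeven : ∀ i, π (2 * i) = r i := by
    intro i
    have h1 : (2 * i) % 2 = 0 := by omega
    have h2 : (2 * i) / 2 = i := by omega
    simp [hπ, h1, h2]
  have hπodd : ∀ i, π (2 * i + 1) = n1 (r i) (w i) := by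
    intro i
    have h1 : (2 * i + 1) % 2 = 1 := by omega
    have h2 : (2 * i + 1) / 2 = i := by omega
    simp [hπ, h1, h2]
  have hplay : G.IsPlay π := by
    intro k
    rcases Nat.even_or_odd k with ⟨i, hi⟩ | ⟨i, hi⟩
    · have hk : k = 2 * i := by omega
      rw [hk, hπeven, hπodd]
      exact (hn1E (r i) (hrmem i) (w i)).1
    · have hk : k = 2 * i + 1 := by omega
      rw [hk, show 2 * i + 1 + 1 = 2 * (i + 1) by ring, hπeven, hπodd, hrstep]
      exact hn2E _
  refine ⟨π, hplay, ?_, ?_, ?_⟩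
  · show π 0 = SG.sI
    have := hπeven 0
    simpa [hr0] using this
  · funext i
    show (SG.labI (π (2 * i + 2)), SG.labO (π (2 * i + 1)))
        = (SG.labI (n2 (n1 (r i) (w i))), w i)
    have h2 : π (2 * i + 2) = r (i + 1) := by
      have := hπeven (i + 1)
      rwa [show 2 * (i + 1) = 2 * i + 2 by ring] at this
    rw [h2, hrstep, hπodd, (hn1E (r i) (hrmem i) (w i)).2]
  · intro k hmem
    rw [hEs] at hmem
    obtain ⟨⟨hE, hS2⟩, hW1, hW2⟩ := hmem
    rcases Nat.even_or_odd k with ⟨i, hi⟩ | ⟨i, hi⟩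
    · have hk : k = 2 * i := by omega
      rw [hk, hπeven] at hS2
      exact hS2 (hrmem i)
    · have hk : k = 2 * i + 1 := by omega
      have hk1 : k + 1 = 2 * (i + 1) := by omega
      rw [hk, hπodd] at hW1
      rw [hk1, hπeven, hrstep] at hW2
      exact hW2 (hn2W _ hW1)
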